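/- arXiv:math/0311034 — 2 statements merged into one kernel-verified Lean document; each statement's English description precedes it below -/
import Mathlib

section
/- Let φ : [0,∞) → (0, 1/(2e)] be a differentiable function satisfying φ'(t) ≤ C·φ(t)·log(1/φ(t))·log(log(1/φ(t))) for all t ≥ 0, where C > 0. Then φ(t) ≤ exp(-(log(1/φ(0)))^{exp(-C t)}) for all t ≥ 0. -/
open Real Set Filter

theorem stmt3 (φ : ℝ → ℝ) (C : ℝ) (hC : 0 < C)
    (hrange : ∀ t, 0 ≤ t → φ t ∈ Set.Ioc (0:ℝ) (1 / (2 * Real.exp 1)))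
    (hdiff : ∀ t, 0 ≤ t → DifferentiableAt ℝ φ t)
    (hineq : ∀ t, 0 ≤ t → deriv φ t ≤
      C * φ t * Real.log (1 / φ t) * Real.log (Real.log (1 / φ t))) :
    ∀ t, 0 ≤ t → φ t ≤ Real.exp (-(Real.log (1 / φ 0)) ^ Real.exp (-C * t)) := by
  have key : ∀ t, 0 ≤ t → 1 ≤ -Real.log (φ t) := by
    intro t ht
    have h := hrange t ht
    have hp : 0 < φ t := h.1
    have h2 : Real.log (φ t) ≤ Real.log (1 / (2 * Real.exp 1)) :=
      Real.log_le_log hp h.2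
    have h3 : Real.log (1 / (2 * Real.exp 1)) = -(Real.log 2 + 1) := by
      rw [one_div, Real.log_inv, Real.log_mul (by norm_num) (Real.exp_ne_zero 1),
        Real.log_exp]
    have h4 : (0:ℝ) < Real.log 2 := Real.log_pos (by norm_num)
    linarith
  -- derivative of ψ = log (-log φ)
  have hψderiv : ∀ t, 0 ≤ t →
      HasDerivAt (fun s => Real.log (-Real.log (φ s)))
        (deriv φ t / (φ t * Real.log (φ t))) t := by
    intro t ht
    have hp : 0 < φ t := (hrange t ht).1
    have hl := key t ht
    have h1 : HasDerivAt φ (deriv φ t) t := (hdiff t ht).hasDerivAt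
    have h2 : HasDerivAt (fun s => Real.log (φ s)) (deriv φ t / φ t) t :=
      h1.log hp.ne'
    have h3 : HasDerivAt (fun s => -Real.log (φ s)) (-(deriv φ t / φ t)) t := h2.neg
    have h4 : HasDerivAt (fun s => Real.log (-Real.log (φ s)))
        (-(deriv φ t / φ t) / (-Real.log (φ t))) t := h3.log (by linarith)
    convert h4 using 1
    have hL : Real.log (φ t) ≠ 0 := by intro h; rw [h] at hl; norm_num at hl
    field_simp
  -- derivative of g = exp (C t) * ψ
  have hgderiv : ∀ t, 0 ≤ t →
      HasDerivAt (fun s => Real.exp (C * s) * Real.log (-Real.log (φ s)))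
        (Real.exp (C * t) * C * Real.log (-Real.log (φ t)) +
          Real.exp (C * t) * (deriv φ t / (φ t * Real.log (φ t)))) t := by
    intro t ht
    have he : HasDerivAt (fun s => Real.exp (C * s)) (Real.exp (C * t) * C) t := by
      simpa using ((hasDerivAt_id t).const_mul C).exp
    exact he.mul (hψderiv t ht)
  -- monotonicity of g on [0,∞)
  have hmono : MonotoneOn (fun s => Real.exp (C * s) * Real.log (-Real.log (φ s)))
      (Set.Ici (0:ℝ)) := by
    apply monotoneOn_of_deriv_nonneg (convex_Ici 0)
    · intro t ht
      exact ((hgderiv t ht).continuousAt).continuousWithinAt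
    · intro t ht
      rw [interior_Ici] at ht
      exact ((hgderiv t ht.le).differentiableAt).differentiableWithinAt
    · intro t ht
      rw [interior_Ici] at ht
      have ht' := (Set.mem_Ioi.mp ht).le
      rw [(hgderiv t ht').deriv]
      have hp : 0 < φ t := (hrange t ht').1
      have hl := key t ht'
      have hL : Real.log (φ t) < 0 := by linarith
      have hpL : φ t * Real.log (φ t) < 0 := mul_neg_of_pos_of_neg hp hL
      have hψ0 : 0 ≤ Real.log (-Real.log (φ t)) := Real.log_nonneg hl
      have hr : Real.log (1 / φ t) = -Real.log (φ t) := by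
        rw [one_div, Real.log_inv]
      have hin := hineq t ht'
      rw [hr] at hin
      have h5 : -C * Real.log (-Real.log (φ t)) ≤
          deriv φ t / (φ t * Real.log (φ t)) := by
        rw [le_div_iff_of_neg hpL]
        nlinarith
      have hexp : 0 < Real.exp (C * t) := Real.exp_pos _
      nlinarith
  -- conclude
  intro t ht
  have hp0 : 0 < φ 0 := (hrange 0 le_rfl).1
  have hpt : 0 < φ t := (hrange t ht).1
  have hl0 := key 0 le_rfl
  have hlt := key t ht
  have hm := hmono (Set.self_mem_Ici) (Set.mem_Ici.mpr ht) ht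
  simp only [mul_zero, Real.exp_zero, one_mul] at hm
  -- hm : log (-log φ 0) ≤ exp (C t) * log (-log φ t)
  have h6 : Real.exp (-C * t) * Real.log (-Real.log (φ 0)) ≤
      Real.log (-Real.log (φ t)) := by
    rw [neg_mul, Real.exp_neg, inv_mul_le_iff₀ (Real.exp_pos _)]
    linarith [hm]
  have h7 : (-Real.log (φ 0)) ^ Real.exp (-C * t) ≤ -Real.log (φ t) := by
    rw [Real.rpow_def_of_pos (by linarith : (0:ℝ) < -Real.log (φ 0))]
    calc Real.exp (Real.log (-Real.log (φ 0)) * Real.exp (-C * t))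
        ≤ Real.exp (Real.log (-Real.log (φ t))) := by
          apply Real.exp_le_exp.mpr; rw [mul_comm]; exact h6
      _ = -Real.log (φ t) := Real.exp_log (by linarith)
  have hr0 : Real.log (1 / φ 0) = -Real.log (φ 0) := by rw [one_div, Real.log_inv]
  rw [hr0]
  calc φ t = Real.exp (Real.log (φ t)) := (Real.exp_log hpt).symm
    _ ≤ Real.exp (-(-Real.log (φ 0)) ^ Real.exp (-C * t)) := by
        apply Real.exp_le_exp.mpr; linarith
end

section
/- Let ρ : [1,∞) → ℝ₊ be a C¹ function with lim_{s→∞} s·ρ'(s)/ρ(s) = 0 and lim_{s→∞} ρ(s) = +∞. Define ψ(ξ) = ∫₀^ξ ds/(s·f(s)+1) and Φ(ξ) = exp(-ψ(ξ)), where f is a strictly positive C¹ extension of ρ to [0,∞) with f = ρ on [1,∞). Then Φ'(ξ) = -Φ(ξ)/(ξ·f(ξ)+1) ≤ 0, and there exists a constant C > 0 such that Φ''(ξ) ≤ C·Φ(ξ)·f(ξ)/(ξ·f(ξ)+1)² for all ξ ≥ 0. -/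
open Real Set Filter MeasureTheory intervalIntegral

theorem stmt8 (ρ f : ℝ → ℝ)
    (hρ : ContDiffOn ℝ 1 ρ (Set.Ici 1))
    (hρpos : ∀ s ∈ Set.Ici (1:ℝ), 0 < ρ s)
    (hρtop : Filter.Tendsto ρ Filter.atTop Filter.atTop)
    (hρratio : Filter.Tendsto (fun s => s * deriv ρ s / ρ s) Filter.atTop (nhds 0))
    (hf : ContDiff ℝ 1 f)
    (hfpos : ∀ s ∈ Set.Ici (0:ℝ), 0 < f s)
    (hfρ : ∀ s ∈ Set.Ici (1:ℝ), f s = ρ s)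
    (ψ Φ : ℝ → ℝ)
    (hψ : ∀ ξ, ψ ξ = ∫ s in (0:ℝ)..ξ, 1 / (s * f s + 1))
    (hΦ : ∀ ξ, Φ ξ = Real.exp (-ψ ξ)) :
    (∀ ξ, 0 ≤ ξ → HasDerivAt Φ (-Φ ξ / (ξ * f ξ + 1)) ξ ∧ -Φ ξ / (ξ * f ξ + 1) ≤ 0) ∧
    ∃ C > (0:ℝ), ∀ ξ, 0 ≤ ξ →
      deriv (deriv Φ) ξ ≤ C * Φ ξ * f ξ / (ξ * f ξ + 1) ^ 2 := by
  have hfc : Continuous f := hf.continuous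
  have hf'c : Continuous (deriv f) := hf.continuous_deriv le_rfl
  set D : ℝ → ℝ := fun s => s * f s + 1 with hDdef
  have hDc : Continuous D := by fun_prop
  have hDnn : ∀ s : ℝ, 0 ≤ s → (1:ℝ) ≤ D s := by
    intro s hs
    have hfs := (hfpos s hs).le
    simp only [hDdef]
    nlinarith [mul_nonneg hs hfs]
  have h0 : (0:ℝ) < D 0 := by simp [hDdef]
  have hopen : IsOpen {x : ℝ | 0 < D x} := isOpen_lt continuous_const hDc
  obtain ⟨δ, hδpos, hball⟩ := Metric.mem_nhds_iff.mp (hopen.mem_nhds h0)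
  have hDU : ∀ s ∈ Ioi (-δ), 0 < D s := by
    intro s hs
    rcases le_or_gt 0 s with h | h
    · linarith [hDnn s h]
    · have hs' : s ∈ Metric.ball (0:ℝ) δ := by
        simp only [Metric.mem_ball, Real.dist_eq, sub_zero, abs_lt]
        exact ⟨mem_Ioi.mp hs, by linarith⟩
      exact hball hs'
  have hΦpos : ∀ ξ, 0 < Φ ξ := fun ξ => by rw [hΦ]; exact Real.exp_pos _
  have hcontOn : ContinuousOn (fun s => 1 / D s) (Ioi (-δ)) :=
    continuousOn_const.div hDc.continuousOn (fun s hs => (hDU s hs).ne')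
  have hmemU : ∀ ξ : ℝ, 0 ≤ ξ → ξ ∈ Ioi (-δ) := fun ξ hξ => mem_Ioi.mpr (by linarith)
  have hψ' : ∀ ξ ∈ Ioi (-δ), HasDerivAt ψ (1 / D ξ) ξ := by
    intro ξ hξ
    have heq : ψ = fun t => ∫ s in (0:ℝ)..t, 1 / D s := funext hψ
    rw [heq]
    have huIcc : Set.uIcc (0:ℝ) ξ ⊆ Ioi (-δ) := by
      intro x hx
      rw [Set.mem_uIcc] at hx
      rw [mem_Ioi] at hξ ⊢
      rcases hx with ⟨h1, _⟩ | ⟨h1, _⟩ <;> linarith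
    exact intervalIntegral.integral_hasDerivAt_right
      ((hcontOn.mono huIcc).intervalIntegrable)
      (hcontOn.stronglyMeasurableAtFilter isOpen_Ioi ξ hξ)
      (hcontOn.continuousAt (isOpen_Ioi.mem_nhds hξ))
  have hΦ' : ∀ ξ ∈ Ioi (-δ), HasDerivAt Φ (-Φ ξ / D ξ) ξ := by
    intro ξ hξ
    have h1 : HasDerivAt (fun t => Real.exp (-ψ t)) (Real.exp (-ψ ξ) * -(1 / D ξ)) ξ :=
      ((hψ' ξ hξ).neg).exp
    have heq : Φ = fun t => Real.exp (-ψ t) := funext hΦ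
    rw [heq]
    convert h1 using 1
    show -Real.exp (-ψ ξ) / D ξ = Real.exp (-ψ ξ) * -(1 / D ξ)
    ring
  have hD' : ∀ ξ : ℝ, HasDerivAt D (f ξ + ξ * deriv f ξ) ξ := by
    intro ξ
    have h1 : HasDerivAt (fun x : ℝ => x * f x) (1 * f ξ + ξ * deriv f ξ) ξ :=
      (hasDerivAt_id ξ).mul ((hf.differentiable one_ne_zero) ξ).hasDerivAt
    simpa [hDdef] using h1.add_const 1
  have hΦ'' : ∀ ξ ∈ Ioi (-δ),
      deriv (deriv Φ) ξ = Φ ξ * (1 + f ξ + ξ * deriv f ξ) / (D ξ) ^ 2 := by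
    intro ξ hξ
    have hev : deriv Φ =ᶠ[nhds ξ] fun x => -Φ x / D x :=
      Filter.eventuallyEq_of_mem (isOpen_Ioi.mem_nhds hξ) (fun x hx => (hΦ' x hx).deriv)
    rw [hev.deriv_eq]
    have hdiff : HasDerivAt (fun x => -Φ x / D x)
        (((-(-Φ ξ / D ξ)) * D ξ - (-Φ ξ) * (f ξ + ξ * deriv f ξ)) / (D ξ) ^ 2) ξ :=
      ((hΦ' ξ hξ).neg.div (hD' ξ) (hDU ξ hξ).ne')
    rw [hdiff.deriv]
    have hne : D ξ ≠ 0 := (hDU ξ hξ).ne'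
    field_simp
    ring
  constructor
  · intro ξ hξ
    refine ⟨hΦ' ξ (hmemU ξ hξ), ?_⟩
    apply div_nonpos_of_nonpos_of_nonneg
    · linarith [hΦpos ξ]
    · have h := hDnn ξ hξ
      simp only [hDdef] at h
      linarith
  · -- find C
    have h1 : ∀ᶠ s in atTop, |s * deriv ρ s / ρ s| < 1 := by
      have := Metric.tendsto_nhds.mp hρratio 1 one_pos
      simpa only [Real.dist_eq, sub_zero] using this
    have h2 : ∀ᶠ s in atTop, (1:ℝ) ≤ ρ s := hρtop.eventually_ge_atTop 1
    have h3 : ∀ᶠ s in atTop, (2:ℝ) ≤ s := eventually_ge_atTop 2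
    obtain ⟨M, hM⟩ := Filter.eventually_atTop.mp ((h1.and h2).and h3)
    set M' : ℝ := max M 2 with hM'def
    have hM'2 : (2:ℝ) ≤ M' := le_max_right M 2
    have htail : ∀ ξ, M' ≤ ξ → 1 + f ξ + ξ * deriv f ξ ≤ 3 * f ξ := by
      intro ξ hξ
      have hξM : M ≤ ξ := le_trans (le_max_left M 2) hξ
      obtain ⟨⟨hr, hρ1⟩, h2ξ⟩ := hM ξ hξM
      have hξ1 : (1:ℝ) ≤ ξ := by linarith
      have hfe : f ξ = ρ ξ := hfρ ξ hξ1
      have hderiv_eq : deriv f ξ = deriv ρ ξ := by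
        apply Filter.EventuallyEq.deriv_eq
        filter_upwards [Ioi_mem_nhds (show (1:ℝ) < ξ by linarith)] with s hs
        exact hfρ s (mem_Ici.mpr (le_of_lt (mem_Ioi.mp hs)))
      have hρξ : 0 < ρ ξ := hρpos ξ hξ1
      have hle : ξ * deriv ρ ξ ≤ ρ ξ := by
        have habs : ξ * deriv ρ ξ / ρ ξ ≤ 1 := (abs_lt.mp hr).2.le
        calc ξ * deriv ρ ξ = (ξ * deriv ρ ξ / ρ ξ) * ρ ξ := by field_simp
        _ ≤ 1 * ρ ξ := mul_le_mul_of_nonneg_right habs hρξ.le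
        _ = ρ ξ := one_mul _
      rw [hfe, hderiv_eq]
      linarith
    -- compact part
    have hIcc : IsCompact (Icc (0:ℝ) M') := isCompact_Icc
    have hne : (Icc (0:ℝ) M').Nonempty := ⟨0, le_refl 0, by linarith⟩
    have hhcont : ContinuousOn (fun ξ : ℝ => 1 + f ξ + ξ * deriv f ξ) (Icc 0 M') := by
      fun_prop
    obtain ⟨x₁, hx₁mem, hx₁⟩ := hIcc.exists_isMaxOn hne hhcont
    obtain ⟨x₀, hx₀mem, hx₀⟩ := hIcc.exists_isMinOn hne hfc.continuousOn
    set K₁ : ℝ := 1 + f x₁ + x₁ * deriv f x₁ with hK₁def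
    set m : ℝ := f x₀ with hmdef
    have hmpos : 0 < m := hfpos x₀ hx₀mem.1
    set C : ℝ := max 3 (K₁ / m) with hCdef
    have hC3 : (3:ℝ) ≤ C := le_max_left _ _
    have hCpos : (0:ℝ) < C := by linarith
    refine ⟨C, hCpos, ?_⟩
    intro ξ hξ
    have hbound : 1 + f ξ + ξ * deriv f ξ ≤ C * f ξ := by
      rcases le_or_gt ξ M' with hcase | hcase
      · have hmemI : ξ ∈ Icc (0:ℝ) M' := ⟨hξ, hcase⟩
        have hh := hx₁ hmemI
        have hm := hx₀ hmemI
        calc 1 + f ξ + ξ * deriv f ξ ≤ K₁ := hh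
        _ = (K₁ / m) * m := by field_simp
        _ ≤ C * m := mul_le_mul_of_nonneg_right (le_max_right _ _) hmpos.le
        _ ≤ C * f ξ := mul_le_mul_of_nonneg_left hm hCpos.le
      · have := htail ξ hcase.le
        have hfξ : 0 < f ξ := hfpos ξ hξ
        nlinarith
    rw [hΦ'' ξ (hmemU ξ hξ)]
    have hDpos : 0 < D ξ := hDU ξ (hmemU ξ hξ)
    have hD2 : (0:ℝ) < D ξ ^ 2 := by positivity
    have hnum : Φ ξ * (1 + f ξ + ξ * deriv f ξ) ≤ C * Φ ξ * f ξ := by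
      nlinarith [hΦpos ξ]
    calc Φ ξ * (1 + f ξ + ξ * deriv f ξ) / D ξ ^ 2
        ≤ (C * Φ ξ * f ξ) / D ξ ^ 2 := by
          exact div_le_div_of_nonneg_right hnum hD2.le
    _ = C * Φ ξ * f ξ / (ξ * f ξ + 1) ^ 2 := rfl
end
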